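/- Let α be a positive transcendental real number. Let G be the additive subgroup of ℝ² generated by the set { q·(α^{2i}, α^{-2i}) : q ∈ ℚ, i ∈ ℤ } ∪ { (α^{2i+1}, α^{-2i-1}) : i ∈ ℤ } ∪ { (2^{1/3}·α^{2i+1}, 0) : i ∈ ℤ }. Then I(G) = { [[α^{2n},0],[0,α^{-2n}]] : n ∈ ℤ }. -/

import Mathlib

open Polynomial Finsupp

/-- For an additive subgroup `G` of `ℝ²` (elements viewed as row vectors), `IG G` is the
set of invertible real `2 × 2` matrices `B` of the form `[[a,0],[0,b]]` or `[[0,a],[b,0]]`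
with `a > 0`, `b > 0`, such that right multiplication by `B` maps `G` onto `G`. -/
def IG (G : AddSubgroup (Fin 2 → ℝ)) : Set (Matrix (Fin 2) (Fin 2) ℝ) :=
  {B | IsUnit B ∧
    (∃ a b : ℝ, 0 < a ∧ 0 < b ∧
      (B = Matrix.of ![![a, 0], ![0, b]] ∨ B = Matrix.of ![![0, a], ![b, 0]])) ∧
    (fun v => Matrix.vecMul v B) '' (G : Set (Fin 2 → ℝ)) = (G : Set (Fin 2 → ℝ))}



noncomputable def cbrt : ℝ := (2:ℝ) ^ ((1:ℝ)/3)

lemma cbrt_pos : 0 < cbrt := Real.rpow_pos_of_pos (by norm_num) _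

lemma cbrt_cube : cbrt ^ 3 = 2 := by
  rw [cbrt, ← Real.rpow_natCast ((2:ℝ) ^ ((1:ℝ)/3)) 3, ← Real.rpow_mul (by norm_num)]
  norm_num

lemma cbrt_irr : Irrational cbrt := by
  apply irrational_nrt_of_notint_nrt 3 2 (by rw [cbrt_cube]; norm_num) _ (by norm_num)
  rintro ⟨y, hy⟩
  have hc := cbrt_cube
  have hp := cbrt_pos
  have h1 : (1:ℝ) < cbrt := by nlinarith [sq_nonneg cbrt, sq_nonneg (cbrt - 1)]
  have h2 : cbrt < 2 := by nlinarith [sq_nonneg cbrt, sq_nonneg (cbrt - 1)]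
  rw [hy] at h1 h2
  have : (1:ℤ) < y := by exact_mod_cast h1
  have : y < 2 := by exact_mod_cast h2
  omega

lemma no_rat_cube (r : ℚ) : r ^ 3 ≠ 2 := by
  intro h
  have h3 : ((r:ℝ)) ^ 3 = cbrt ^ 3 := by rw [cbrt_cube]; exact_mod_cast h
  have := (Odd.strictMono_pow (R := ℝ) (⟨1, by norm_num⟩ : Odd 3)).injective h3
  exact cbrt_irr ⟨r, this⟩



noncomputable def Ev (α : ℝ) : (ℤ →₀ ℚ) →ₗ[ℚ] ℝ :=
  Finsupp.linearCombination ℚ fun i : ℤ => α ^ i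

lemma Ev_single (α : ℝ) (i : ℤ) (q : ℚ) : Ev α (Finsupp.single i q) = q * α ^ i := by
  rw [Ev, Finsupp.linearCombination_single, Rat.smul_def]

lemma cbrt_def : (2:ℝ) ^ ((1:ℝ)/3) = cbrt := rfl

noncomputable def toP (N : ℕ) (f : ℤ →₀ ℚ) : ℚ[X] :=
  f.sum fun i q => C q * X ^ (i + N).toNat

lemma toP_aeval (α : ℝ) (hne : α ≠ 0) (N : ℕ) (f : ℤ →₀ ℚ)
    (hs : ∀ i ∈ f.support, -(N:ℤ) ≤ i) :
    (aeval α) (toP N f) = α ^ (N:ℤ) * Ev α f := by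
  rw [Ev, Finsupp.linearCombination_apply, toP, Finsupp.sum, Finsupp.sum, map_sum,
    Finset.mul_sum]
  apply Finset.sum_congr rfl
  intro i hi
  have h0 : (0:ℤ) ≤ i + N := by have := hs i hi; omega
  have h1 : ((i+(N:ℤ)).toNat : ℤ) = i + N := Int.toNat_of_nonneg h0
  rw [map_mul, map_pow, aeval_X, aeval_C, ← zpow_natCast α, h1, zpow_add₀ hne]
  simp [Rat.smul_def]
  ring

lemma toP_eq_zero (N : ℕ) (f : ℤ →₀ ℚ) (hs : ∀ i ∈ f.support, -(N:ℤ) ≤ i)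
    (h : toP N f = 0) : f = 0 := by
  ext j
  by_cases hj : j ∈ f.support
  · have h2 := congrArg (fun p => coeff p (j + (N:ℤ)).toNat) h
    simp only [toP, Finsupp.sum, finset_sum_coeff, coeff_C_mul, coeff_X_pow,
      coeff_zero] at h2
    rw [Finset.sum_eq_single j] at h2
    · simpa using h2
    · intro b hb hbj
      rw [if_neg, mul_zero]
      have := hs b hb; have := hs j hj
      omega
    · intro hj'; exact absurd hj hj'
  · simpa using Finsupp.notMem_support_iff.mp hj

lemma poly_zero {α : ℝ} (htr : Transcendental ℚ α) (p : ℚ[X]) (h : (aeval α) p = 0) :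
    p = 0 := by
  by_contra hp; exact htr ⟨p, hp, h⟩

lemma ML {α : ℝ} (hα : 0 < α) (htr : Transcendental ℚ α) (f g : ℤ →₀ ℚ)
    (h : Ev α f + cbrt * Ev α g = 0) : f = 0 ∧ g = 0 := by
  have hne : α ≠ 0 := ne_of_gt hα
  set N : ℕ := ((f.support ∪ g.support).sup fun i => (-i).toNat) with hN
  have hsf : ∀ i ∈ f.support, -(N:ℤ) ≤ i := by
    intro i hi
    have h1 : (-i).toNat ≤ N := Finset.le_sup (f := fun i => (-i).toNat)
      (Finset.mem_union_left _ hi)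
    omega
  have hsg : ∀ i ∈ g.support, -(N:ℤ) ≤ i := by
    intro i hi
    have h1 : (-i).toNat ≤ N := Finset.le_sup (f := fun i => (-i).toNat)
      (Finset.mem_union_right _ hi)
    omega
  have hP := toP_aeval α hne N f hsf
  have hQ := toP_aeval α hne N g hsg
  by_cases hq : Ev α g = 0
  · have hg : g = 0 := toP_eq_zero N g hsg
      (poly_zero htr _ (by rw [hQ, hq, mul_zero]))
    have hf0 : Ev α f = 0 := by rw [hq, mul_zero, add_zero] at h; exact h
    have hf : f = 0 := toP_eq_zero N f hsf
      (poly_zero htr _ (by rw [hP, hf0, mul_zero]))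
    exact ⟨hf, hg⟩
  · exfalso
    set P := toP N f with hPd
    set Q := toP N g with hQd
    have hQne : (aeval α) Q ≠ 0 := by
      rw [hQ]; exact mul_ne_zero (zpow_ne_zero _ hne) hq
    have h1 : (aeval α) P + cbrt * (aeval α) Q = 0 := by
      rw [hP, hQ]
      calc α ^ (N:ℤ) * Ev α f + cbrt * (α ^ (N:ℤ) * Ev α g)
          = α ^ (N:ℤ) * (Ev α f + cbrt * Ev α g) := by ring
        _ = 0 := by rw [h, mul_zero]
    have key : (aeval α) (P^3 + 2 * Q^3) = 0 := by
      have h2 : (aeval α) P = -(cbrt * (aeval α) Q) := by linarith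
      have h3 : (-(cbrt * (aeval α) Q))^3 = -(2 * ((aeval α) Q)^3) := by
        rw [← cbrt_cube]; ring
      simp only [map_add, map_mul, map_pow, map_ofNat]
      rw [h2, h3]; ring
    have hPQ : P^3 + 2*Q^3 = 0 := poly_zero htr _ key
    have hQ0 : Q ≠ 0 := fun h0 => hQne (by rw [h0, map_zero])
    have hlq : Q.leadingCoeff ≠ 0 := leadingCoeff_ne_zero.mpr hQ0
    have hP3 : P^3 = -(2*Q^3) := by linear_combination hPQ
    have hlc : P.leadingCoeff ^ 3 = -(2 * Q.leadingCoeff ^ 3) := by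
      have := congrArg leadingCoeff hP3
      rwa [leadingCoeff_pow, leadingCoeff_neg, leadingCoeff_mul, leadingCoeff_pow,
        show ((2:ℚ[X])).leadingCoeff = 2 by norm_num [leadingCoeff]] at this
    apply no_rat_cube (-(P.leadingCoeff / Q.leadingCoeff))
    field_simp
    linear_combination -hlc

noncomputable def refl' (f : ℤ →₀ ℚ) : ℤ →₀ ℚ := Finsupp.equivMapDomain (Equiv.neg ℤ) f

lemma refl'_apply (f : ℤ →₀ ℚ) (j : ℤ) : refl' f j = f (-j) := by
  simp [refl', Finsupp.equivMapDomain_apply]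

lemma refl'_add (f g : ℤ →₀ ℚ) : refl' (f + g) = refl' f + refl' g := by
  ext j; simp [refl'_apply]

lemma refl'_neg (f : ℤ →₀ ℚ) : refl' (-f) = -(refl' f) := by
  ext j; simp [refl'_apply]

lemma refl'_zero : refl' 0 = 0 := by ext j; simp [refl'_apply]

lemma refl'_single (i : ℤ) (q : ℚ) : refl' (Finsupp.single i q) = Finsupp.single (-i) q := by
  rw [refl', Finsupp.equivMapDomain_single]; rfl

lemma refl'_eq_zero {f : ℤ →₀ ℚ} (h : refl' f = 0) : f = 0 := by
  ext j
  have := congrArg (fun g => Finsupp.toFun g (-j)) h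
  simpa [refl'_apply] using congr_fun (congrArg DFunLike.coe h) (-j)

def Hset (α : ℝ) : Set (Fin 2 → ℝ) :=
  {v | ∃ f g : ℤ →₀ ℚ, (∀ i, g i ≠ 0 → Odd i) ∧ (∀ i, ∃ m : ℤ, g i = m) ∧
    v 0 = Ev α f + cbrt * Ev α g ∧ v 1 = Ev α (refl' f)}

def Hgrp (α : ℝ) : AddSubgroup (Fin 2 → ℝ) where
  carrier := Hset α
  zero_mem' := ⟨0, 0, by simp, fun i => ⟨0, by simp⟩, by simp, by simp [refl'_zero]⟩
  add_mem' := by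
    rintro v w ⟨f, g, hodd, hint, h0, h1⟩ ⟨f', g', hodd', hint', h0', h1'⟩
    refine ⟨f + f', g + g', ?_, ?_, ?_, ?_⟩
    · intro i hi
      rcases eq_or_ne (g i) 0 with h | h
      · exact hodd' i (by simpa [Finsupp.add_apply, h] using hi)
      · exact hodd i h
    · intro i
      obtain ⟨m, hm⟩ := hint i; obtain ⟨m', hm'⟩ := hint' i
      exact ⟨m + m', by simp [Finsupp.add_apply, hm, hm']⟩
    · simp only [Pi.add_apply, h0, h0', map_add]; ring
    · simp only [Pi.add_apply, h1, h1', refl'_add, map_add]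
  neg_mem' := by
    rintro v ⟨f, g, hodd, hint, h0, h1⟩
    refine ⟨-f, -g, ?_, ?_, ?_, ?_⟩
    · intro i hi
      exact hodd i (by simpa using hi)
    · intro i
      obtain ⟨m, hm⟩ := hint i
      exact ⟨-m, by simp [hm]⟩
    · simp only [Pi.neg_apply, h0, map_neg]; ring
    · simp only [Pi.neg_apply, h1, refl'_neg, map_neg]

lemma closure_le_Hgrp (α : ℝ) :
    AddSubgroup.closure
        ({v | ∃ q : ℚ, ∃ i : ℤ, v = (q : ℝ) • ![α ^ (2 * i), α ^ (-(2 * i))]} ∪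
         {v | ∃ i : ℤ, v = ![α ^ (2 * i + 1), α ^ (-(2 * i) - 1)]} ∪
         {v | ∃ i : ℤ, v = ![(2 : ℝ) ^ ((1 : ℝ) / 3) * α ^ (2 * i + 1), 0]}) ≤ Hgrp α := by
  rw [AddSubgroup.closure_le]
  rintro v ((⟨q, i, rfl⟩ | ⟨i, rfl⟩) | ⟨i, rfl⟩)
  · refine ⟨Finsupp.single (2*i) q, 0, by simp, fun j => ⟨0, by simp⟩, ?_, ?_⟩
    · rw [Ev_single, map_zero, mul_zero, add_zero]
      simp only [Pi.smul_apply, Matrix.cons_val_zero, smul_eq_mul]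
    · rw [refl'_single, Ev_single]
      simp only [Pi.smul_apply, Matrix.cons_val_one, Matrix.head_cons, smul_eq_mul, Matrix.cons_val_zero]
  · refine ⟨Finsupp.single (2*i+1) 1, 0, by simp, fun j => ⟨0, by simp⟩, ?_, ?_⟩
    · rw [Ev_single, map_zero, mul_zero, add_zero, Rat.cast_one, one_mul]
      simp only [Matrix.cons_val_zero]
    · rw [refl'_single, Ev_single, Rat.cast_one, one_mul]
      simp only [Matrix.cons_val_one, Matrix.head_cons, Matrix.cons_val_zero]
      congr 1
      ring
  · refine ⟨0, Finsupp.single (2*i+1) 1, ?_, ?_, ?_, ?_⟩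
    · intro j hj
      rcases eq_or_ne (2*i+1) j with rfl | h
      · exact ⟨i, by ring⟩
      · rw [Finsupp.single_apply, if_neg h] at hj
        exact absurd rfl hj
    · intro j
      rcases eq_or_ne (2*i+1) j with rfl | h
      · exact ⟨1, by simp⟩
      · exact ⟨0, by rw [Finsupp.single_apply, if_neg h]; simp⟩
    · rw [map_zero, zero_add, Ev_single, Rat.cast_one, one_mul, cbrt]
      simp only [Matrix.cons_val_zero]
    · rw [refl'_zero, map_zero]
      simp only [Matrix.cons_val_one, Matrix.head_cons, Matrix.cons_val_zero]

lemma Ev_inj {α : ℝ} (hα : 0 < α) (htr : Transcendental ℚ α) {f f' : ℤ →₀ ℚ}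
    (h : Ev α f = Ev α f') : f = f' := by
  have := (ML hα htr (f - f') 0 (by rw [map_sub, map_zero, mul_zero, add_zero, h, sub_self])).1
  rwa [sub_eq_zero] at this

lemma ML2 {α : ℝ} (hα : 0 < α) (htr : Transcendental ℚ α) {f g f' g' : ℤ →₀ ℚ}
    (h : Ev α f + cbrt * Ev α g = Ev α f' + cbrt * Ev α g') : f = f' ∧ g = g' := by
  have := ML hα htr (f - f') (g - g') (by rw [map_sub, map_sub]; linarith)
  exact ⟨sub_eq_zero.mp this.1, sub_eq_zero.mp this.2⟩

lemma toP_coeff_int (N : ℕ) (f : ℤ →₀ ℚ) (hf : ∀ i, ∃ m : ℤ, f i = m) (k : ℕ) :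
    ∃ m : ℤ, (toP N f).coeff k = m := by
  have : (toP N f).coeff k ∈ (Int.castRingHom ℚ).range := by
    rw [toP, Finsupp.sum, finset_sum_coeff]
    apply Subring.sum_mem
    intro i _
    rw [coeff_C_mul, coeff_X_pow]
    obtain ⟨m, hm⟩ := hf i
    by_cases h : k = (i + (N:ℤ)).toNat
    · rw [if_pos h, mul_one, hm]; exact ⟨m, rfl⟩
    · rw [if_neg h, mul_zero]; exact ⟨0, by simp⟩
  obtain ⟨m, hm⟩ := this
  exact ⟨m, hm.symm⟩

lemma UL {α : ℝ} (hα : 0 < α) (htr : Transcendental ℚ α)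
    (g₁ g₂ : ℤ →₀ ℚ) (hi1 : ∀ i, ∃ m : ℤ, g₁ i = m) (hi2 : ∀ i, ∃ m : ℤ, g₂ i = m)
    (hprod : Ev α g₁ * Ev α g₂ = α ^ (2:ℤ)) (hpos : 0 < Ev α g₁) :
    ∃ n : ℤ, g₁ = Finsupp.single n 1 ∧ Ev α g₁ = α ^ n := by
  have hne : α ≠ 0 := ne_of_gt hα
  set N : ℕ := ((g₁.support ∪ g₂.support).sup fun i => (-i).toNat) with hN
  have hs1 : ∀ i ∈ g₁.support, -(N:ℤ) ≤ i := by
    intro i hi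
    have h1 : (-i).toNat ≤ N := Finset.le_sup (f := fun i => (-i).toNat)
      (Finset.mem_union_left _ hi)
    omega
  have hs2 : ∀ i ∈ g₂.support, -(N:ℤ) ≤ i := by
    intro i hi
    have h1 : (-i).toNat ≤ N := Finset.le_sup (f := fun i => (-i).toNat)
      (Finset.mem_union_right _ hi)
    omega
  set P := toP N g₁ with hPd
  set Q := toP N g₂ with hQd
  have hP := toP_aeval α hne N g₁ hs1
  have hQ := toP_aeval α hne N g₂ hs2
  have hPQ : P * Q = X ^ (2*N+2) := by
    rw [← sub_eq_zero]
    apply poly_zero htr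
    rw [map_sub, map_mul, hP, hQ, map_pow, aeval_X]
    have : (α ^ (N:ℤ) * Ev α g₁) * (α ^ (N:ℤ) * Ev α g₂)
        = α ^ (N:ℤ) * α ^ (N:ℤ) * α ^ (2:ℤ) := by rw [← hprod]; ring
    rw [this, ← zpow_natCast α (2*N+2)]
    rw [← zpow_add₀ hne, ← zpow_add₀ hne]
    push_cast
    ring_nf
  -- P divides X^(2N+2)
  obtain ⟨j, hjle, u, huP⟩ := (dvd_prime_pow prime_X (2*N+2)).mp ⟨Q, hPQ.symm⟩
  obtain ⟨l, hlle, w, hwQ⟩ := (dvd_prime_pow prime_X (2*N+2)).mp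
    ⟨P, by rw [mul_comm Q P]; exact hPQ.symm⟩
  obtain ⟨r, hru, hCr⟩ := Polynomial.isUnit_iff.mp u.isUnit
  obtain ⟨s, hsu, hCs⟩ := Polynomial.isUnit_iff.mp w.isUnit
  have hPr : P * C r = X ^ j := by rw [hCr]; exact huP
  have hQs : Q * C s = X ^ l := by rw [hCs]; exact hwQ
  have hr0 : r ≠ 0 := hru.ne_zero
  have hs0 : s ≠ 0 := hsu.ne_zero
  -- r * s = 1 by evaluating X^(2N+2) * C (r*s) = X^(j+l) at 1
  have hrs : r * s = 1 := by
    have h2 : (P * C r) * (Q * C s) = X ^ (j+l) := by rw [hPr, hQs, pow_add]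
    have h3 : (X:ℚ[X]) ^ (2*N+2) * C (r*s) = X ^ (j+l) := by
      rw [← hPQ, ← h2, C_mul]; ring
    have := congrArg (fun p => Polynomial.eval 1 p) h3
    simpa using this
  -- coeff of P at j is r⁻¹, an integer
  have hPexp : P = C r⁻¹ * X ^ j := by
    have : P * (C r * C r⁻¹) = C r⁻¹ * X ^ j := by
      rw [← mul_assoc, hPr]; ring
    rwa [← C_mul, mul_inv_cancel₀ hr0, map_one, mul_one] at this
  obtain ⟨mr, hmr⟩ := toP_coeff_int N g₁ hi1 j
  have hrinv : r⁻¹ = mr := by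
    have : P.coeff j = r⁻¹ := by rw [hPexp, coeff_C_mul, coeff_X_pow, if_pos rfl, mul_one]
    rw [← this]; exact hmr
  obtain ⟨ms, hms⟩ := toP_coeff_int N g₂ hi2 l
  have hsinv : s⁻¹ = ms := by
    have hQexp : Q = C s⁻¹ * X ^ l := by
      have : Q * (C s * C s⁻¹) = C s⁻¹ * X ^ l := by rw [← mul_assoc, hQs]; ring
      rwa [← C_mul, mul_inv_cancel₀ hs0, map_one, mul_one] at this
    have : Q.coeff l = s⁻¹ := by rw [hQexp, coeff_C_mul, coeff_X_pow, if_pos rfl, mul_one]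
    rw [← this]; exact hms
  have hmrms : mr * ms = 1 := by
    have : (mr : ℚ) * ms = 1 := by
      rw [← hrinv, ← hsinv, ← mul_inv, hrs, inv_one]
    exact_mod_cast this
  have hmr1 : mr = 1 ∨ mr = -1 := Int.isUnit_iff.mp (IsUnit.of_mul_eq_one _ hmrms)
  -- Ev g₁ = α^(j - N) * r⁻¹
  have hEv1 : Ev α g₁ = α ^ ((j:ℤ) - N) * (mr : ℝ) := by
    have h1 : (aeval α) P = (r⁻¹ : ℚ) * α ^ (j:ℤ) := by
      rw [hPexp, map_mul, map_pow, aeval_X, aeval_C, zpow_natCast]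
      norm_num
    rw [hP] at h1
    have h2 : Ev α g₁ = α ^ (-(N:ℤ)) * ((r⁻¹:ℚ) * α ^ (j:ℤ)) := by
      rw [← h1, ← mul_assoc, ← zpow_add₀ hne]
      norm_num
    rw [h2, hrinv, zpow_sub₀ hne]
    push_cast
    field_simp
    rw [mul_comm, ← mul_assoc, ← zpow_add₀ hne]; simp
  have hmrpos : mr = 1 := by
    rcases hmr1 with h | h
    · exact h
    · exfalso
      rw [h] at hEv1
      have : (0:ℝ) < α ^ ((j:ℤ) - N) := zpow_pos hα _
      rw [hEv1] at hpos
      push_cast at hpos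
      nlinarith
  refine ⟨(j:ℤ) - N, ?_, ?_⟩
  · apply Ev_inj hα htr
    rw [Ev_single, hEv1, hmrpos]
    push_cast
    ring
  · rw [hEv1, hmrpos]; push_cast; ring

lemma vecMul_diag (a b : ℝ) (v : Fin 2 → ℝ) :
    Matrix.vecMul v (Matrix.of ![![a,0],![0,b]]) = ![v 0 * a, v 1 * b] := by
  funext j
  fin_cases j <;>
    simp [Matrix.vecMul, dotProduct, Fin.sum_univ_two]

lemma vecMul_anti (a b : ℝ) (v : Fin 2 → ℝ) :
    Matrix.vecMul v (Matrix.of ![![0,a],![b,0]]) = ![v 1 * b, v 0 * a] := by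
  funext j
  fin_cases j <;>
    simp [Matrix.vecMul, dotProduct, Fin.sum_univ_two]

noncomputable def phiB (B : Matrix (Fin 2) (Fin 2) ℝ) : (Fin 2 → ℝ) →+ (Fin 2 → ℝ) :=
  AddMonoidHom.mk' (fun v => Matrix.vecMul v B) (fun x y => Matrix.add_vecMul _ _ _)


lemma vec2_ext {x y : Fin 2 → ℝ} (h0 : x 0 = y 0) (h1 : x 1 = y 1) : x = y := by
  funext j
  fin_cases j
  · exact h0
  · exact h1

theorem stmt2 (α : ℝ) (hα : 0 < α) (htr : Transcendental ℚ α) :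
    IG (AddSubgroup.closure
        ({v | ∃ q : ℚ, ∃ i : ℤ, v = (q : ℝ) • ![α ^ (2 * i), α ^ (-(2 * i))]} ∪
         {v | ∃ i : ℤ, v = ![α ^ (2 * i + 1), α ^ (-(2 * i) - 1)]} ∪
         {v | ∃ i : ℤ, v = ![(2 : ℝ) ^ ((1 : ℝ) / 3) * α ^ (2 * i + 1), 0]})) =
      {B | ∃ n : ℤ, B = Matrix.of ![![α ^ (2 * n), 0], ![0, α ^ (-(2 * n))]]} := by
  have hne : α ≠ 0 := ne_of_gt hα
  set S : Set (Fin 2 → ℝ) :=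
      ({v | ∃ q : ℚ, ∃ i : ℤ, v = (q : ℝ) • ![α ^ (2 * i), α ^ (-(2 * i))]} ∪
       {v | ∃ i : ℤ, v = ![α ^ (2 * i + 1), α ^ (-(2 * i) - 1)]} ∪
       {v | ∃ i : ℤ, v = ![(2 : ℝ) ^ ((1 : ℝ) / 3) * α ^ (2 * i + 1), 0]}) with hS
  have hmem : ∀ v : Fin 2 → ℝ, v ∈ (AddSubgroup.closure S : Set (Fin 2 → ℝ)) → v ∈ Hset α :=
    fun v hv => closure_le_Hgrp α hv
  ext B
  simp only [Set.mem_setOf_eq]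
  constructor
  · rintro ⟨hBu, ⟨a, b, ha, hb, hform⟩, himg⟩
    have hane : a ≠ 0 := ne_of_gt ha
    have hbne : b ≠ 0 := ne_of_gt hb
    -- the third-generator vector
    set v₃ : Fin 2 → ℝ := ![(2 : ℝ) ^ ((1 : ℝ) / 3) * α ^ (2 * (0:ℤ) + 1), 0] with hv₃
    have hv₃S : v₃ ∈ S := by rw [hS]; exact Or.inr ⟨0, rfl⟩
    have hv₃G : v₃ ∈ (AddSubgroup.closure S : Set (Fin 2 → ℝ)) :=
      AddSubgroup.subset_closure hv₃S
    rcases hform with hB | hB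
    · -- diagonal case
      have h1 : Matrix.vecMul v₃ B ∈ (AddSubgroup.closure S : Set (Fin 2 → ℝ)) := by
        rw [← himg]; exact ⟨v₃, hv₃G, rfl⟩
      rw [hB, vecMul_diag] at h1
      obtain ⟨f, g, hodd, hint, h0, hy⟩ := hmem _ h1
      simp only [Matrix.cons_val_zero, Matrix.cons_val_one, Matrix.head_cons, hv₃] at h0 hy
      have hf0 : f = 0 := by
        apply refl'_eq_zero
        apply Ev_inj hα htr
        rw [map_zero, ← hy, zero_mul]
      rw [hf0, map_zero, zero_add, cbrt_def] at h0
      have hz1 : α ^ (2*(0:ℤ)+1) = α := by norm_num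
      rw [hz1] at h0
      have hc := ne_of_gt cbrt_pos
      have hg1 : Ev α g = α * a := by
        apply mul_left_cancel₀ hc
        rw [← h0]; ring
      -- Step 2: backward preimage of v₃
      obtain ⟨w, hwG, hw⟩ : ∃ w ∈ (AddSubgroup.closure S : Set (Fin 2 → ℝ)),
          Matrix.vecMul w B = v₃ := by
        have : v₃ ∈ (fun v => Matrix.vecMul v B) '' (AddSubgroup.closure S : Set (Fin 2 → ℝ)) := by
          rw [himg]; exact hv₃G
        obtain ⟨w, hw1, hw2⟩ := this
        exact ⟨w, hw1, hw2⟩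
      rw [hB, vecMul_diag] at hw
      have hw0 : w 0 * a = cbrt * α := by
        have := congr_fun hw 0
        simp only [Matrix.cons_val_zero, hv₃] at this
        rw [this, hz1, cbrt_def]
      have hw1 : w 1 = 0 := by
        have := congr_fun hw 1
        simp only [Matrix.cons_val_one, Matrix.head_cons, hv₃] at this
        rcases mul_eq_zero.mp this with h | h
        · exact h
        · exact absurd h hbne
      obtain ⟨f', g', hodd', hint', h0', hy'⟩ := hmem _ hwG
      have hf'0 : f' = 0 := by
        apply refl'_eq_zero
        apply Ev_inj hα htr
        rw [map_zero, ← hy', hw1]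
      rw [hf'0, map_zero, zero_add] at h0'
      have hg2 : Ev α g' * a = α := by
        apply mul_left_cancel₀ hc
        rw [← mul_assoc, ← h0', hw0]
      have hpos1 : 0 < Ev α g := by rw [hg1]; positivity
      have hprod : Ev α g * Ev α g' = α ^ (2:ℤ) := by
        have h2 : α ^ (2:ℤ) = α * α := by
          rw [show (2:ℤ) = 1+1 from rfl, zpow_add₀ hne, zpow_one]
        calc Ev α g * Ev α g' = α * (Ev α g' * a) := by rw [hg1]; ring
          _ = α * α := by rw [hg2]
          _ = α ^ (2:ℤ) := h2.symm
      obtain ⟨n, hgs, hEvg⟩ := UL hα htr g g' hint hint' hprod hpos1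
      have hoddn : Odd n := by
        apply hodd n
        rw [hgs, Finsupp.single_eq_same]
        exact one_ne_zero
      obtain ⟨m, hm⟩ := hoddn
      have ha2 : a = α ^ (2*m) := by
        apply mul_left_cancel₀ hne
        have : α * a = α ^ n := by rw [← hg1, hEvg]
        rw [this, hm, add_comm, zpow_add₀ hne, zpow_one]
      -- Step 3: second generator
      set v₂ : Fin 2 → ℝ := ![α ^ (2*(0:ℤ) + 1), α ^ (-(2*(0:ℤ)) - 1)] with hv₂
      have hv₂G : v₂ ∈ (AddSubgroup.closure S : Set (Fin 2 → ℝ)) :=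
        AddSubgroup.subset_closure (by rw [hS]; exact Or.inl (Or.inr ⟨0, rfl⟩))
      have h3 : Matrix.vecMul v₂ B ∈ (AddSubgroup.closure S : Set (Fin 2 → ℝ)) := by
        rw [← himg]; exact ⟨v₂, hv₂G, rfl⟩
      rw [hB, vecMul_diag] at h3
      obtain ⟨f₂, g₂, hodd₂, hint₂, h0₂, hy₂⟩ := hmem _ h3
      simp only [Matrix.cons_val_zero, Matrix.cons_val_one, Matrix.head_cons, hv₂] at h0₂ hy₂
      rw [hz1] at h0₂
      have hf₂ : f₂ = Finsupp.single (2*m+1) 1 := by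
        have heq : Ev α (Finsupp.single (2*m+1) (1:ℚ)) + cbrt * Ev α 0
            = Ev α f₂ + cbrt * Ev α g₂ := by
          rw [Ev_single, map_zero, mul_zero, add_zero, Rat.cast_one, one_mul, ← h0₂, ha2]
          rw [zpow_add₀ hne, zpow_one]; ring
        exact (ML2 hα htr heq).1.symm
      rw [hf₂, refl'_single, Ev_single, Rat.cast_one, one_mul] at hy₂
      have hz2 : α ^ (-(2*(0:ℤ)) - 1) = α ^ (-1 : ℤ) := by norm_num
      rw [hz2] at hy₂
      have hb2 : b = α ^ (-(2*m)) := by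
        have hcan : α ^ (-1:ℤ) ≠ 0 := zpow_ne_zero _ hne
        apply mul_left_cancel₀ hcan
        rw [hy₂, ← zpow_add₀ hne]
        congr 1; ring
      exact ⟨m, by rw [hB, ha2, hb2]⟩
    · -- antidiagonal case : contradiction
      exfalso
      have h1 : Matrix.vecMul v₃ B ∈ (AddSubgroup.closure S : Set (Fin 2 → ℝ)) := by
        rw [← himg]; exact ⟨v₃, hv₃G, rfl⟩
      rw [hB, vecMul_anti] at h1
      obtain ⟨f, g, hodd, hint, h0, hy⟩ := hmem _ h1
      simp only [Matrix.cons_val_zero, Matrix.cons_val_one, Matrix.head_cons, hv₃] at h0 hy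
      have := ML hα htr f g (by rw [← h0, zero_mul])
      rw [this.1, refl'_zero, map_zero] at hy
      have : (0:ℝ) < (2 : ℝ) ^ ((1 : ℝ) / 3) * α ^ (2 * (0:ℤ) + 1) * a := by positivity
      rw [hy] at this
      exact lt_irrefl _ this
  · rintro ⟨n, rfl⟩
    set M : Matrix (Fin 2) (Fin 2) ℝ :=
      Matrix.of ![![α ^ (2*n), 0], ![0, α ^ (-(2*n))]] with hM
    have hdet : M.det = 1 := by
      rw [hM, Matrix.det_fin_two_of, ← zpow_add₀ hne]
      norm_num
    refine ⟨?_, ⟨α ^ (2*n), α ^ (-(2*n)), zpow_pos hα _, zpow_pos hα _, Or.inl rfl⟩, ?_⟩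
    · rw [Matrix.isUnit_iff_isUnit_det, hdet]
      exact isUnit_one
    · -- image equality
      have himgS : (fun v => Matrix.vecMul v M) '' S = S := by
        rw [hS]
        apply Set.Subset.antisymm
        · rintro w ⟨v, hv, rfl⟩
          dsimp only
          rcases hv with (⟨q, i, rfl⟩ | ⟨i, rfl⟩) | ⟨i, rfl⟩
          · refine Or.inl (Or.inl ⟨q, i + n, ?_⟩)
            rw [hM, vecMul_diag]
            apply vec2_ext
            · simp only [Pi.smul_apply, Matrix.cons_val_zero, smul_eq_mul]
              rw [mul_assoc, ← zpow_add₀ hne, show 2*i + 2*n = 2*(i+n) by ring]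
            · simp only [Pi.smul_apply, Matrix.cons_val_one, Matrix.head_cons, smul_eq_mul, Matrix.cons_val_zero]
              rw [mul_assoc, ← zpow_add₀ hne, show -(2*i) + -(2*n) = -(2*(i+n)) by ring]
          · refine Or.inl (Or.inr ⟨i + n, ?_⟩)
            rw [hM, vecMul_diag]
            apply vec2_ext
            · simp only [Matrix.cons_val_zero]
              rw [← zpow_add₀ hne, show 2*i+1 + 2*n = 2*(i+n)+1 by ring]
            · simp only [Matrix.cons_val_one, Matrix.head_cons, Matrix.cons_val_zero]
              rw [← zpow_add₀ hne, show -(2*i) - 1 + -(2*n) = -(2*(i+n)) - 1 by ring]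
          · refine Or.inr ⟨i + n, ?_⟩
            rw [hM, vecMul_diag]
            apply vec2_ext
            · simp only [Matrix.cons_val_zero]
              rw [mul_assoc, ← zpow_add₀ hne, show 2*i+1 + 2*n = 2*(i+n)+1 by ring]
            · simp only [Matrix.cons_val_one, Matrix.head_cons, Matrix.cons_val_zero]
              rw [zero_mul]
        · intro w hw
          rcases hw with (⟨q, i, rfl⟩ | ⟨i, rfl⟩) | ⟨i, rfl⟩
          · refine ⟨(q:ℝ) • ![α ^ (2*(i-n)), α ^ (-(2*(i-n)))],
              Or.inl (Or.inl ⟨q, i - n, rfl⟩), ?_⟩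
            dsimp only
            rw [hM, vecMul_diag]
            apply vec2_ext
            · simp only [Pi.smul_apply, Matrix.cons_val_zero, smul_eq_mul]
              rw [mul_assoc, ← zpow_add₀ hne, show 2*(i-n) + 2*n = 2*i by ring]
            · simp only [Pi.smul_apply, Matrix.cons_val_one, Matrix.head_cons, smul_eq_mul, Matrix.cons_val_zero]
              rw [mul_assoc, ← zpow_add₀ hne, show -(2*(i-n)) + -(2*n) = -(2*i) by ring]
          · refine ⟨![α ^ (2*(i-n)+1), α ^ (-(2*(i-n)) - 1)],
              Or.inl (Or.inr ⟨i - n, rfl⟩), ?_⟩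
            dsimp only
            rw [hM, vecMul_diag]
            apply vec2_ext
            · simp only [Matrix.cons_val_zero]
              rw [← zpow_add₀ hne, show 2*(i-n)+1 + 2*n = 2*i+1 by ring]
            · simp only [Matrix.cons_val_one, Matrix.head_cons, Matrix.cons_val_zero]
              rw [← zpow_add₀ hne, show -(2*(i-n)) - 1 + -(2*n) = -(2*i) - 1 by ring]
          · refine ⟨![(2 : ℝ) ^ ((1 : ℝ)/3) * α ^ (2*(i-n)+1), 0],
              Or.inr ⟨i - n, rfl⟩, ?_⟩
            dsimp only
            rw [hM, vecMul_diag]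
            apply vec2_ext
            · simp only [Matrix.cons_val_zero]
              rw [mul_assoc, ← zpow_add₀ hne, show 2*(i-n)+1 + 2*n = 2*i+1 by ring]
            · simp only [Matrix.cons_val_one, Matrix.head_cons, Matrix.cons_val_zero]
              rw [zero_mul]
      calc (fun v => Matrix.vecMul v M) '' (AddSubgroup.closure S : Set (Fin 2 → ℝ))
          = ((AddSubgroup.closure S).map (phiB M) : Set (Fin 2 → ℝ)) := by
            rw [AddSubgroup.coe_map]; rfl
        _ = ((AddSubgroup.closure ((fun v => Matrix.vecMul v M) '' S)) : Set (Fin 2 → ℝ)) := by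
            rw [AddMonoidHom.map_closure]; rfl
        _ = (AddSubgroup.closure S : Set (Fin 2 → ℝ)) := by rw [himgS]
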